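/- Let Φ be the standard normal CDF, and suppose w > 0, ŵ ∈ R with w > |ŵ|, and τ > 0. Then 0 < 1 - Φ((ŵ+w)/τ)·Φ((w-ŵ)/τ) < (2/√(2π)) · ((w-|ŵ|)/τ)^{-1} · exp(-(w-|ŵ|)²/(2τ²)). -/

import Mathlib

open MeasureTheory Real Set Filter

/-- The standard normal cumulative distribution function. -/
noncomputable def stdNormalCDF (x : ℝ) : ℝ :=
  (Real.sqrt (2 * Real.pi))⁻¹ * ∫ t in Set.Iic x, Real.exp (-t ^ 2 / 2)

private lemma gauss_eq : (fun t : ℝ => Real.exp (-t ^ 2 / 2)) =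
    fun t : ℝ => Real.exp (-(1/2 : ℝ) * t ^ 2) := by
  funext t; ring_nf

private lemma gauss_int : Integrable (fun t : ℝ => Real.exp (-t ^ 2 / 2)) := by
  rw [gauss_eq]; exact integrable_exp_neg_mul_sq (by norm_num)

private lemma gauss_total : (∫ t : ℝ, Real.exp (-t ^ 2 / 2)) = Real.sqrt (2 * Real.pi) := by
  rw [gauss_eq]
  rw [integral_gaussian (1/2 : ℝ)]
  norm_num [mul_comm]

private lemma sqrt2pi_pos : 0 < Real.sqrt (2 * Real.pi) :=
  Real.sqrt_pos.mpr (by positivity)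

private lemma Iic_int_pos (x : ℝ) : 0 < ∫ t in Set.Iic x, Real.exp (-t ^ 2 / 2) := by
  refine (setIntegral_pos_iff_support_of_nonneg_ae ?_ gauss_int.integrableOn).mpr ?_
  · filter_upwards with t using (Real.exp_pos _).le
  · have : Function.support (fun t : ℝ => Real.exp (-t ^ 2 / 2)) = Set.univ := by
      ext t; simp [Function.mem_support, (Real.exp_pos _).ne']
    rw [this, Set.univ_inter, Real.volume_Iic]
    simp

private lemma Ioi_int_pos (x : ℝ) : 0 < ∫ t in Set.Ioi x, Real.exp (-t ^ 2 / 2) := by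
  refine (setIntegral_pos_iff_support_of_nonneg_ae ?_ gauss_int.integrableOn).mpr ?_
  · filter_upwards with t using (Real.exp_pos _).le
  · have : Function.support (fun t : ℝ => Real.exp (-t ^ 2 / 2)) = Set.univ := by
      ext t; simp [Function.mem_support, (Real.exp_pos _).ne']
    rw [this, Set.univ_inter, Real.volume_Ioi]
    simp

private lemma stdNormalCDF_pos (x : ℝ) : 0 < stdNormalCDF x :=
  mul_pos (inv_pos.mpr sqrt2pi_pos) (Iic_int_pos x)

private lemma Iic_add_Ioi (x : ℝ) :
    (∫ t in Set.Iic x, Real.exp (-t ^ 2 / 2)) + (∫ t in Set.Ioi x, Real.exp (-t ^ 2 / 2))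
      = Real.sqrt (2 * Real.pi) := by
  rw [intervalIntegral.integral_Iic_add_Ioi gauss_int.integrableOn gauss_int.integrableOn, gauss_total]

private lemma stdNormalCDF_lt_one (x : ℝ) : stdNormalCDF x < 1 := by
  have h := Iic_add_Ioi x
  have h2 := Ioi_int_pos x
  rw [stdNormalCDF, inv_mul_lt_iff₀ sqrt2pi_pos, mul_one]
  linarith

private lemma stdNormalCDF_mono {x y : ℝ} (h : x ≤ y) : stdNormalCDF x ≤ stdNormalCDF y := by
  unfold stdNormalCDF
  refine mul_le_mul_of_nonneg_left ?_ (inv_pos.mpr sqrt2pi_pos).le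
  refine setIntegral_mono_set gauss_int.integrableOn ?_ (HasSubset.Subset.eventuallyLE (Iic_subset_Iic.mpr h))
  filter_upwards with t using (Real.exp_pos _).le

private lemma Ioi_exp_eq (x : ℝ) :
    (∫ t in Set.Ioi x, t * Real.exp (-t ^ 2 / 2)) = Real.exp (-x ^ 2 / 2) := by
  have : ∫ t in Set.Ioi x, t * Real.exp (-t ^ 2 / 2) = 0 - (- Real.exp (-x ^ 2 / 2)) := by
    apply integral_Ioi_of_hasDerivAt_of_tendsto' (f := fun t => - Real.exp (-t ^ 2 / 2))
    · intro t _
      have h1 : HasDerivAt (fun t : ℝ => -t ^ 2 / 2) (-t) t := by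
        have := (hasDerivAt_pow 2 t).neg.div_const 2
        convert this using 1
        · rfl
        · rfl
        · rfl
        · rw [show (2:ℕ) - 1 = 1 from rfl]; push_cast; ring
      have h2 := (h1.exp).neg
      convert h2 using 1
      · rfl
      · ring
    · have := (integrable_mul_exp_neg_mul_sq (b := 1/2) (by norm_num)).integrableOn (s := Set.Ioi x)
      refine this.congr_fun ?_ measurableSet_Ioi
      intro t _; ring_nf
    · rw [show (0:ℝ) = -0 by ring]
      apply Tendsto.neg
      have : Tendsto (fun t : ℝ => -t ^ 2 / 2) atTop atBot := by
        apply Tendsto.atBot_div_const (by norm_num)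
        simpa using (tendsto_pow_atTop (n := 2) (by norm_num)).neg
      exact Real.tendsto_exp_atBot.comp this
  linarith [this]

private lemma tail_bound {x : ℝ} (hx : 0 < x) :
    1 - stdNormalCDF x ≤ (Real.sqrt (2 * Real.pi))⁻¹ * x⁻¹ * Real.exp (-x ^ 2 / 2) := by
  have key : (∫ t in Set.Ioi x, Real.exp (-t ^ 2 / 2)) ≤ x⁻¹ * Real.exp (-x ^ 2 / 2) := by
    rw [← Ioi_exp_eq x, ← integral_const_mul]
    apply setIntegral_mono_on gauss_int.integrableOn
    · exact ((integrable_mul_exp_neg_mul_sq (b := 1/2) (by norm_num)).integrableOn.congr_fun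
        (fun t _ => by ring_nf) measurableSet_Ioi).const_mul _
    · exact measurableSet_Ioi
    · intro t ht
      have htx : x ≤ t := le_of_lt ht
      rw [← mul_assoc]
      nth_rewrite 1 [← one_mul (Real.exp _)]
      gcongr
      rw [← div_eq_inv_mul, le_div_iff₀ hx]
      linarith
  have h := Iic_add_Ioi x
  have heq : 1 - stdNormalCDF x = (Real.sqrt (2 * Real.pi))⁻¹ * ∫ t in Set.Ioi x, Real.exp (-t ^ 2 / 2) := by
    rw [stdNormalCDF, show (∫ t in Set.Iic x, Real.exp (-t ^ 2 / 2)) =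
      Real.sqrt (2 * Real.pi) - ∫ t in Set.Ioi x, Real.exp (-t ^ 2 / 2) from by linarith,
      mul_sub, inv_mul_cancel₀ sqrt2pi_pos.ne']
    ring
  rw [heq, mul_assoc]
  gcongr

/-- For `w > |w'|` and `τ > 0`,
`0 < 1 - Φ((w'+w)/τ)Φ((w-w')/τ) < (2/√(2π)) ((w-|w'|)/τ)⁻¹ exp(-(w-|w'|)²/(2τ²))`. -/
theorem stmt_8 (w w' τ : ℝ) (hw : 0 < w) (hw' : |w'| < w) (hτ : 0 < τ) :
    0 < 1 - stdNormalCDF ((w' + w) / τ) * stdNormalCDF ((w - w') / τ) ∧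
      1 - stdNormalCDF ((w' + w) / τ) * stdNormalCDF ((w - w') / τ) <
        2 / Real.sqrt (2 * Real.pi) * ((w - |w'|) / τ)⁻¹ *
          Real.exp (-(w - |w'|) ^ 2 / (2 * τ ^ 2)) := by
  set x := (w - |w'|) / τ with hxdef
  have habs : -|w'| ≤ w' ∧ w' ≤ |w'| := ⟨neg_abs_le w', le_abs_self w'⟩
  have hx : 0 < x := div_pos (by linarith) hτ
  have hxa : x ≤ (w' + w) / τ := by apply div_le_div_of_nonneg_right ?_ hτ.le; linarith
  have hxb : x ≤ (w - w') / τ := by apply div_le_div_of_nonneg_right ?_ hτ.le; linarith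
  have ha1 := stdNormalCDF_lt_one ((w' + w) / τ)
  have hb1 := stdNormalCDF_lt_one ((w - w') / τ)
  have ha0 := stdNormalCDF_pos ((w' + w) / τ)
  have hb0 := stdNormalCDF_pos ((w - w') / τ)
  have hxpos := stdNormalCDF_pos x
  have hx1 := stdNormalCDF_lt_one x
  have hma := stdNormalCDF_mono hxa
  have hmb := stdNormalCDF_mono hxb
  constructor
  · nlinarith
  · have hsq : stdNormalCDF x * stdNormalCDF x ≤
        stdNormalCDF ((w' + w) / τ) * stdNormalCDF ((w - w') / τ) := by
      apply mul_le_mul hma hmb hxpos.le ha0.le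
    have htail := tail_bound hx
    have hexp : Real.exp (-x ^ 2 / 2) = Real.exp (-(w - |w'|) ^ 2 / (2 * τ ^ 2)) := by
      have harg : -x ^ 2 / 2 = -(w - |w'|) ^ 2 / (2 * τ ^ 2) := by
        rw [hxdef, div_pow]
        field_simp
      rw [harg]
    rw [← hexp, div_eq_mul_inv (2:ℝ)]
    nlinarith [sq_nonneg (1 - stdNormalCDF x), inv_pos.mpr hx, inv_pos.mpr sqrt2pi_pos,
      Real.exp_pos (-x ^ 2 / 2)]
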